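/- arXiv:1701.04074 — 3 statements merged into one kernel-verified Lean document; each statement's English description precedes it below -/
import Mathlib

section
/- The real Jacobian determinant of the Cayley transform Φ(z', z_n) = (z'/(1+z_n), i(1-z_n)/(1+z_n)), viewed as a map from R^{2n} to R^{2n}, equals 4/|1+ξ_n|^{2(n+1)} at each point ξ of the open unit ball B^n. -/
open MeasureTheory Real Complex

noncomputable section

/-- `ℂ^n` split as `(z', z_n)` with `z' ∈ ℂ^{n-1}` (here `m = n - 1`). -/
abbrev Cn (m : ℕ) := (Fin m → ℂ) × ℂ

/-- `|z'|² = ∑ |z_j|²` for `z' ∈ ℂ^{n-1}`. -/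
def nsq1 {m : ℕ} (z' : Fin m → ℂ) : ℝ := ∑ j, ‖z' j‖ ^ 2

/-- `⟨z', w'⟩ = ∑_{j<n} z_j conj w_j`. -/
def herm1 {m : ℕ} (z' w' : Fin m → ℂ) : ℂ := ∑ j, z' j * (starRingEnd ℂ) (w' j)

/-- Full Hermitian pairing `⟨z, w⟩` on `ℂ^n`. -/
def hermP {m : ℕ} (ξ η : Cn m) : ℂ := herm1 ξ.1 η.1 + ξ.2 * (starRingEnd ℂ) η.2

/-- `|z|²` on `ℂ^n`. -/
def nsqP {m : ℕ} (ξ : Cn m) : ℝ := nsq1 ξ.1 + ‖ξ.2‖ ^ 2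

/-- `ρ(z,w) = (i/2)(conj w_n - z_n) - ⟨z', w'⟩`. -/
def rhoK {m : ℕ} (z w : Cn m) : ℂ :=
  Complex.I / 2 * ((starRingEnd ℂ) w.2 - z.2) - herm1 z.1 w.1

/-- `ρ(z) = Im z_n - |z'|²`. -/
def rho {m : ℕ} (z : Cn m) : ℝ := z.2.im - nsq1 z.1

/-- The Siegel upper half-space `U ⊂ ℂ^n`. -/
def Siegel (m : ℕ) : Set (Cn m) := {z | nsq1 z.1 < z.2.im}

/-- The open unit ball of `ℂ^n`. -/
def Ball (m : ℕ) : Set (Cn m) := {ξ | nsqP ξ < 1}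

/-- The Cayley transform `Φ : B^n → U`. -/
def cayley {m : ℕ} (ξ : Cn m) : Cn m :=
  ((1 + ξ.2)⁻¹ • ξ.1, Complex.I * ((1 - ξ.2) / (1 + ξ.2)))

namespace CayleyAux

variable {R M N : Type*} [Field R] [AddCommGroup M] [Module R M] [AddCommGroup N] [Module R N]

/-- The shear `(v, w) ↦ (v + φ w, w)`. -/
def shear (φ : N →ₗ[R] M) : (M × N) →ₗ[R] (M × N) :=
  LinearMap.id + (LinearMap.inl R M N).comp (φ.comp (LinearMap.snd R M N))

@[simp] lemma shear_apply (φ : N →ₗ[R] M) (p : M × N) :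
    shear φ p = (p.1 + φ p.2, p.2) := by
  simp [shear, Prod.ext_iff]

lemma shear_comp (φ ψ : N →ₗ[R] M) : (shear φ).comp (shear ψ) = shear (φ + ψ) := by
  refine LinearMap.ext fun p => ?_
  simp [Prod.ext_iff]
  abel

lemma shear_zero : shear (0 : N →ₗ[R] M) = LinearMap.id := by
  refine LinearMap.ext fun p => ?_
  simp

/-- The involution `(v, w) ↦ (v, -w)`. -/
def flipSnd : (M × N) →ₗ[R] (M × N) := LinearMap.prodMap LinearMap.id (-LinearMap.id)

/-- A shear has real determinant `1`. -/
lemma det_shear {M N : Type*} [AddCommGroup M] [Module ℝ M] [AddCommGroup N] [Module ℝ N]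
    (φ : N →ₗ[ℝ] M) : LinearMap.det (shear φ) = 1 := by
  have hsq : LinearMap.det (shear ((2:ℝ)⁻¹ • φ)) * LinearMap.det (shear ((2:ℝ)⁻¹ • φ))
      = LinearMap.det (shear φ) := by
    rw [← LinearMap.det_comp, shear_comp, ← add_smul]
    norm_num
  have hinv : LinearMap.det (shear φ) * LinearMap.det (shear (-φ)) = 1 := by
    rw [← LinearMap.det_comp, shear_comp, add_neg_cancel, shear_zero, LinearMap.det_id]
  have hff : (flipSnd : (M × N) →ₗ[ℝ] (M × N)).comp flipSnd = LinearMap.id := by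
    refine LinearMap.ext fun p => ?_
    simp [flipSnd]
  have hf2 : LinearMap.det (flipSnd : (M × N) →ₗ[ℝ] (M × N))
      * LinearMap.det (flipSnd : (M × N) →ₗ[ℝ] (M × N)) = 1 := by
    rw [← LinearMap.det_comp, hff, LinearMap.det_id]
  have hconj : LinearMap.det (shear (-φ)) = LinearMap.det (shear φ) := by
    have h1 : (flipSnd).comp ((shear φ).comp flipSnd) = shear (-φ) := by
      refine LinearMap.ext fun p => ?_
      simp [flipSnd, Prod.ext_iff]
    calc LinearMap.det (shear (-φ))
        = LinearMap.det ((flipSnd).comp ((shear φ).comp flipSnd)) := by rw [h1]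
      _ = LinearMap.det (flipSnd : (M × N) →ₗ[ℝ] (M × N)) * (LinearMap.det (shear φ)
            * LinearMap.det (flipSnd : (M × N) →ₗ[ℝ] (M × N))) := by
          rw [LinearMap.det_comp, LinearMap.det_comp]
      _ = LinearMap.det (shear φ) := by
          linear_combination LinearMap.det (shear φ) * hf2
  rw [hconj] at hinv
  nlinarith [hsq, hinv]

/-- Determinant of a product map is the product of determinants. -/
lemma det_prodMap {R M N : Type*} [Field R] [AddCommGroup M] [Module R M] [AddCommGroup N]
    [Module R N] [FiniteDimensional R M] [FiniteDimensional R N]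
    (f : M →ₗ[R] M) (g : N →ₗ[R] N) :
    LinearMap.det (f.prodMap g) = LinearMap.det f * LinearMap.det g := by
  classical
  let B1 := Module.finBasis R M
  let B2 := Module.finBasis R N
  rw [← LinearMap.det_toMatrix (B1.prod B2), ← LinearMap.det_toMatrix B1,
    ← LinearMap.det_toMatrix B2, LinearMap.toMatrix_prodMap,
    Matrix.det_fromBlocks_zero₂₁]

/-- Splitting off the first coordinate of `Fin (n+1) → ℂ`, as a real-linear equivalence. -/
def eFin (n : ℕ) : (Fin (n+1) → ℂ) ≃ₗ[ℝ] ℂ × (Fin n → ℂ) where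
  toFun f := (f 0, fun i => f i.succ)
  invFun p := Fin.cons p.1 p.2
  left_inv f := by
    funext i
    refine Fin.cases ?_ (fun j => ?_) i <;> simp
  right_inv p := by simp
  map_add' f g := rfl
  map_smul' c f := rfl

/-- The real determinant of complex scalar multiplication on `ℂ`. -/
lemma det_restrict_smul_id_c (b : ℂ) :
    LinearMap.det (((b • LinearMap.id : ℂ →ₗ[ℂ] ℂ)).restrictScalars ℝ) = Complex.normSq b := by
  have hmul : ((b • LinearMap.id : ℂ →ₗ[ℂ] ℂ).restrictScalars ℝ) = Algebra.lmul ℝ ℂ b := by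
    refine LinearMap.ext fun z => ?_
    simp [Algebra.lmul]
  rw [hmul]
  have : LinearMap.det (Algebra.lmul ℝ ℂ b) = Algebra.norm ℝ b := rfl
  rw [this, Algebra.norm_complex_apply]

/-- The real determinant of complex scalar multiplication on `ℂ^m`. -/
lemma det_restrict_smul_id (a : ℂ) (m : ℕ) :
    LinearMap.det (((a • LinearMap.id : (Fin m → ℂ) →ₗ[ℂ] (Fin m → ℂ))).restrictScalars ℝ)
      = Complex.normSq a ^ m := by
  induction m with
  | zero => rw [LinearMap.det_eq_one_of_subsingleton, pow_zero]
  | succ n ih =>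
      set f := ((a • LinearMap.id : (Fin (n+1) → ℂ) →ₗ[ℂ] _)).restrictScalars ℝ
      have hconj : (((eFin n : (Fin (n+1) → ℂ) →ₗ[ℝ] ℂ × (Fin n → ℂ))).comp
          (f.comp ((eFin n).symm : (ℂ × (Fin n → ℂ)) →ₗ[ℝ] (Fin (n+1) → ℂ))))
          = LinearMap.prodMap ((a • LinearMap.id : ℂ →ₗ[ℂ] ℂ).restrictScalars ℝ)
              (((a • LinearMap.id : (Fin n → ℂ) →ₗ[ℂ] _)).restrictScalars ℝ) := by
        refine LinearMap.ext fun p => ?_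
        simp [f, eFin, Prod.ext_iff]
        rfl
      have := LinearMap.det_conj f (eFin n)
      rw [hconj] at this
      rw [← this, det_prodMap, ih, det_restrict_smul_id_c, pow_succ]
      ring

end CayleyAux

open CayleyAux in
theorem cayley_jacobian (m : ℕ) (ξ : Cn m) (hξ : ξ ∈ Ball m) :
    DifferentiableAt ℝ (cayley (m := m)) ξ ∧
      |(fderiv ℝ (cayley (m := m)) ξ).det|
        = 4 / ‖1 + ξ.2‖ ^ (2 * (m + 2)) := by
  have h0 : ‖ξ.2‖ < 1 := by
    have h1 : 0 ≤ nsq1 ξ.1 := Finset.sum_nonneg fun j _ => sq_nonneg _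
    have h2 : nsq1 ξ.1 + ‖ξ.2‖ ^ 2 < 1 := hξ
    nlinarith [norm_nonneg ξ.2]
  have hs : (1 : ℂ) + ξ.2 ≠ 0 := by
    intro h
    have : ξ.2 = -1 := by linear_combination h
    simp [this] at h0
  -- derivative of the scalar factor
  have hinv : HasDerivAt (fun w : ℂ => (1 + w)⁻¹) (-(1 / (1 + ξ.2) ^ 2)) ξ.2 := by
    have h := ((hasDerivAt_id ξ.2).const_add (1 : ℂ)).inv hs
    refine h.congr_deriv ?_
    simp only [id_eq]
    ring
  have hc : HasFDerivAt (fun z : Cn m => (1 + z.2)⁻¹)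
      ((-(1 / (1 + ξ.2) ^ 2)) • ContinuousLinearMap.snd ℂ (Fin m → ℂ) ℂ) ξ :=
    hinv.comp_hasFDerivAt ξ hasFDerivAt_snd
  have h1 : HasFDerivAt (fun z : Cn m => (1 + z.2)⁻¹ • z.1)
      ((1 + ξ.2)⁻¹ • ContinuousLinearMap.fst ℂ (Fin m → ℂ) ℂ +
        ((-(1 / (1 + ξ.2) ^ 2)) • ContinuousLinearMap.snd ℂ (Fin m → ℂ) ℂ).smulRight ξ.1) ξ :=
    hc.smul hasFDerivAt_fst
  have hde2 : HasDerivAt (fun w : ℂ => Complex.I * ((1 - w) / (1 + w)))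
      (Complex.I * (-2 / (1 + ξ.2) ^ 2)) ξ.2 := by
    have hnum : HasDerivAt (fun w : ℂ => 1 - w) (-1) ξ.2 := (hasDerivAt_id ξ.2).const_sub 1
    have hden : HasDerivAt (fun w : ℂ => 1 + w) 1 ξ.2 := (hasDerivAt_id ξ.2).const_add 1
    have hdiv := (hnum.div hden hs).const_mul Complex.I
    refine hdiv.congr_deriv ?_
    ring
  have h2 : HasFDerivAt (fun z : Cn m => Complex.I * ((1 - z.2) / (1 + z.2)))
      ((Complex.I * (-2 / (1 + ξ.2) ^ 2)) • ContinuousLinearMap.snd ℂ (Fin m → ℂ) ℂ) ξ :=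
    hde2.comp_hasFDerivAt ξ hasFDerivAt_snd
  set L : Cn m →L[ℂ] Cn m :=
    ((1 + ξ.2)⁻¹ • ContinuousLinearMap.fst ℂ (Fin m → ℂ) ℂ +
        ((-(1 / (1 + ξ.2) ^ 2)) • ContinuousLinearMap.snd ℂ (Fin m → ℂ) ℂ).smulRight ξ.1).prod
      ((Complex.I * (-2 / (1 + ξ.2) ^ 2)) • ContinuousLinearMap.snd ℂ (Fin m → ℂ) ℂ) with hL_def
  have hF : HasFDerivAt (cayley (m := m)) L ξ := by
    unfold cayley
    exact h1.prodMk h2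
  have hFR : HasFDerivAt (cayley (m := m)) (L.restrictScalars ℝ) ξ := hF.restrictScalars ℝ
  refine ⟨hFR.differentiableAt, ?_⟩
  rw [hFR.fderiv]
  -- factor the derivative as a diagonal map composed with a shear
  set D : Cn m →ₗ[ℂ] Cn m :=
    LinearMap.prodMap ((1 + ξ.2)⁻¹ • LinearMap.id : (Fin m → ℂ) →ₗ[ℂ] (Fin m → ℂ))
      ((Complex.I * (-2 / (1 + ξ.2) ^ 2)) • LinearMap.id : ℂ →ₗ[ℂ] ℂ) with hD_def
  set φ : ℂ →ₗ[ℂ] (Fin m → ℂ) :=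
    LinearMap.toSpanSingleton ℂ (Fin m → ℂ) ((-(1 + ξ.2)⁻¹) • ξ.1) with hφ_def
  have hfact : (L : Cn m →ₗ[ℂ] Cn m) = D.comp (shear φ) := by
    refine LinearMap.ext fun p => ?_
    simp only [hL_def, hD_def, hφ_def, ContinuousLinearMap.coe_coe,
      ContinuousLinearMap.prod_apply, ContinuousLinearMap.add_apply,
      ContinuousLinearMap.coe_smul', Pi.smul_apply, ContinuousLinearMap.coe_fst',
      ContinuousLinearMap.smulRight_apply, ContinuousLinearMap.coe_snd',
      LinearMap.coe_comp, Function.comp_apply, shear_apply, LinearMap.prodMap_apply,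
      LinearMap.smul_apply, LinearMap.id_coe, id_eq, LinearMap.toSpanSingleton_apply,
      Prod.mk.injEq]
    constructor
    · match_scalars <;> simp only [smul_eq_mul, mul_one] <;> (field_simp; try ring; try (left; ring))
    · trivial
  have hcoe : ((L.restrictScalars ℝ : Cn m →L[ℝ] Cn m) : Cn m →ₗ[ℝ] Cn m)
      = (L : Cn m →ₗ[ℂ] Cn m).restrictScalars ℝ := rfl
  have hdet : (L.restrictScalars ℝ : Cn m →L[ℝ] Cn m).det
      = Complex.normSq ((1 + ξ.2)⁻¹) ^ m * Complex.normSq (Complex.I * (-2 / (1 + ξ.2) ^ 2)) := by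
    show LinearMap.det ((L.restrictScalars ℝ : Cn m →L[ℝ] Cn m) : Cn m →ₗ[ℝ] Cn m) = _
    rw [hcoe, hfact]
    have hsplit : (D.comp (shear φ)).restrictScalars ℝ
        = (D.restrictScalars ℝ).comp ((shear φ).restrictScalars ℝ) := rfl
    have hshearR : (shear φ).restrictScalars ℝ = shear (φ.restrictScalars ℝ) := rfl
    have hDR : D.restrictScalars ℝ
        = LinearMap.prodMap
            (((1 + ξ.2)⁻¹ • LinearMap.id : (Fin m → ℂ) →ₗ[ℂ] (Fin m → ℂ)).restrictScalars ℝ)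
            (((Complex.I * (-2 / (1 + ξ.2) ^ 2)) • LinearMap.id : ℂ →ₗ[ℂ] ℂ).restrictScalars ℝ)
        := rfl
    rw [hsplit, LinearMap.det_comp, hshearR, det_shear, mul_one, hDR, det_prodMap,
      det_restrict_smul_id, det_restrict_smul_id_c]
  rw [hdet]
  have hA : 0 < ‖1 + ξ.2‖ := norm_pos_iff.mpr hs
  have hna : Complex.normSq ((1 + ξ.2)⁻¹) = (‖1 + ξ.2‖ ^ 2)⁻¹ := by
    rw [← Complex.sq_norm, norm_inv, inv_pow]
  have hnb : Complex.normSq (Complex.I * (-2 / (1 + ξ.2) ^ 2))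
      = 4 / ‖1 + ξ.2‖ ^ 4 := by
    rw [← Complex.sq_norm, norm_mul, Complex.norm_I, one_mul, norm_div, norm_pow]
    rw [show ‖(-2 : ℂ)‖ = 2 by simp]
    rw [div_pow]
    norm_num
    ring
  rw [hna, hnb, _root_.abs_of_nonneg (by positivity)]
  rw [show 2 * (m + 2) = 2 * m + 4 from by ring, pow_add, pow_mul, inv_pow]
  rw [eq_div_iff (by positivity)]
  field_simp

end
end

section
/- Let s, t be real numbers such that t ≤ -1 or s - t ≤ n + 1. Then for every z in the Siegel upper half-space U, the integral ∫_U ρ(w)^t / |ρ(z,w)|^s dV(w) diverges (equals +∞). -/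
open MeasureTheory Real Complex

noncomputable section

open Set
open scoped ENNReal Pointwise

section Aux
variable {m : ℕ}

lemma measurable_rpow_const (t : ℝ) : Measurable fun x : ℝ => x ^ t := by
  have heq : (fun x : ℝ => x ^ t) = fun x =>
      if x < 0 then Real.exp (Real.log x * t) * Real.cos (t * π)
      else if x = 0 then (0:ℝ) ^ t else Real.exp (Real.log x * t) := by
    funext x
    rcases lt_trichotomy x 0 with h | h | h
    · rw [if_pos h, Real.rpow_def_of_neg h]
    · subst h; simp
    · rw [if_neg (not_lt.2 h.le), if_neg h.ne', Real.rpow_def_of_pos h]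
  rw [heq]
  refine Measurable.ite measurableSet_Iio ((Real.measurable_log.mul measurable_const).exp.mul measurable_const) ?_
  exact Measurable.ite (measurableSet_singleton 0) measurable_const ((Real.measurable_log.mul measurable_const).exp)


variable {m : ℕ}

lemma nsq1_nonneg (w' : Fin m → ℂ) : 0 ≤ nsq1 w' := Finset.sum_nonneg fun j _ => sq_nonneg _

lemma continuous_nsq1 : Continuous (nsq1 (m := m)) := by
  unfold nsq1
  exact continuous_finset_sum _ fun j _ => (continuous_norm.comp (continuous_apply j)).pow 2

lemma continuous_herm1 (z' : Fin m → ℂ) : Continuous fun w' : Fin m → ℂ => herm1 z' w' := by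
  unfold herm1
  exact continuous_finset_sum _ fun j _ => continuous_const.mul (continuous_star.comp (continuous_apply j))

lemma abs_herm1_le (z' w' : Fin m → ℂ) :
    ‖herm1 z' w'‖ ≤ Real.sqrt (nsq1 z') * Real.sqrt (nsq1 w') := by
  have h1 : ‖herm1 z' w'‖ ≤ ∑ j, ‖z' j‖ * ‖w' j‖ := by
    refine (norm_sum_le _ _).trans_eq ?_
    exact Finset.sum_congr rfl fun j _ => by rw [norm_mul, Complex.norm_conj]
  refine h1.trans ?_
  have h3 : ∑ j, ‖z' j‖ * ‖w' j‖ ≤ Real.sqrt (nsq1 z' * nsq1 w') := by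
    rw [Real.le_sqrt (Finset.sum_nonneg fun j _ => mul_nonneg (norm_nonneg _) (norm_nonneg _)) (mul_nonneg (nsq1_nonneg _) (nsq1_nonneg _))]
    exact Finset.sum_mul_sq_le_sq_mul_sq _ _ _
  exact h3.trans_eq (Real.sqrt_mul (nsq1_nonneg z') _)

lemma rpow_le_max {l u x : ℝ} (s : ℝ) (hl : 0 < l) (h1 : l ≤ x) (h2 : x ≤ u) :
    x ^ s ≤ max (u ^ s) (l ^ s) := by
  rcases le_or_gt 0 s with hs | hs
  · exact le_max_of_le_left (Real.rpow_le_rpow (hl.le.trans h1) h2 hs)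
  · exact le_max_of_le_right (Real.rpow_le_rpow_of_nonpos hl h1 hs.le)

lemma min_le_rpow {l u x : ℝ} (s : ℝ) (hl : 0 < l) (h1 : l ≤ x) (h2 : x ≤ u) :
    min (l ^ s) (u ^ s) ≤ x ^ s := by
  rcases le_or_gt 0 s with hs | hs
  · exact min_le_of_left_le (Real.rpow_le_rpow hl.le h1 hs)
  · exact min_le_of_right_le (Real.rpow_le_rpow_of_nonpos (hl.trans_le h1) h2 hs.le)

lemma nsq1_smul (c : ℝ) (w' : Fin m → ℂ) : nsq1 (c • w') = c ^ 2 * nsq1 w' := by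
  unfold nsq1
  rw [Finset.mul_sum]
  refine Finset.sum_congr rfl fun j _ => ?_
  simp only [Pi.smul_apply]
  rw [Complex.real_smul, norm_mul, Complex.norm_real, Real.norm_eq_abs, mul_pow, _root_.sq_abs]

def VB (m : ℕ) : ℝ≥0∞ := volume {w' : Fin m → ℂ | nsq1 w' < 1}

lemma VB_pos : 0 < VB m :=
  (isOpen_lt continuous_nsq1 continuous_const).measure_pos volume ⟨0, by simp [nsq1]⟩

lemma VB_lt_top : VB m < ⊤ := by
  refine lt_of_le_of_lt (measure_mono (fun w hw => ?_)) (IsCompact.measure_lt_top (isCompact_closedBall (0 : Fin m → ℂ) 1))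
  rw [Metric.mem_closedBall, dist_zero_right]
  refine pi_norm_le_iff_of_nonneg zero_le_one |>.2 fun j => ?_
  have h1 : ‖w j‖ ^ 2 ≤ nsq1 w :=
    Finset.single_le_sum (fun i _ => sq_nonneg (‖w i‖)) (Finset.mem_univ j)
  have h2 : nsq1 w < 1 := hw
  have := norm_nonneg (w j)
  nlinarith

lemma finrank_Cnm : Module.finrank ℝ (Fin m → ℂ) = 2 * m := by
  simp [Module.finrank_pi_fintype, Complex.finrank_real_complex, mul_comm]

lemma volume_nsq1_lt (r : ℝ) (hr : 0 < r) :
    volume {w' : Fin m → ℂ | nsq1 w' < r} = ENNReal.ofReal (r ^ m) * VB m := by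
  have hs0 : (0:ℝ) < Real.sqrt r := Real.sqrt_pos.2 hr
  have hset : {w' : Fin m → ℂ | nsq1 w' < r} = Real.sqrt r • {w' : Fin m → ℂ | nsq1 w' < 1} := by
    ext w
    rw [Set.mem_smul_set_iff_inv_smul_mem₀ hs0.ne']
    simp only [Set.mem_setOf_eq, nsq1_smul, inv_pow, Real.sq_sqrt hr.le]
    rw [inv_mul_eq_div, div_lt_one hr]
  rw [hset, Measure.addHaar_smul_of_nonneg volume (Real.sqrt_nonneg r), VB, finrank_Cnm,
    pow_mul, Real.sq_sqrt hr.le]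

lemma L3 (t : ℝ) (ht : t ≤ -1) : ∫⁻ v in Set.Ioo (0:ℝ) 1, ENNReal.ofReal (v ^ t) = ⊤ := by
  by_contra hfin
  have hm : Measurable fun v : ℝ => v ^ t := measurable_rpow_const t
  have : IntegrableOn (fun v : ℝ => v ^ t) (Set.Ioo 0 1) := by
    rw [IntegrableOn, ← lintegral_ofReal_ne_top_iff_integrable hm.aestronglyMeasurable.restrict]
    · exact hfin
    · filter_upwards [ae_restrict_mem measurableSet_Ioo] with v hv
      exact Real.rpow_nonneg hv.1.le t
  rw [intervalIntegral.integrableOn_Ioo_rpow_iff one_pos] at this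
  linarith

lemma L4 (p Y : ℝ) (hp : -1 ≤ p) (hY : 0 < Y) : ∫⁻ v in Set.Ioi Y, ENNReal.ofReal (v ^ p) = ⊤ := by
  by_contra hfin
  have hm : Measurable fun v : ℝ => v ^ p := measurable_rpow_const p
  have : IntegrableOn (fun v : ℝ => v ^ p) (Set.Ioi Y) := by
    rw [IntegrableOn, ← lintegral_ofReal_ne_top_iff_integrable hm.aestronglyMeasurable.restrict]
    · exact hfin
    · filter_upwards [ae_restrict_mem measurableSet_Ioi] with v hv
      exact Real.rpow_nonneg (hY.trans hv).le p
  rw [integrableOn_Ioi_rpow_iff hY] at this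
  linarith

lemma slice1 (u c t : ℝ) (hc : 0 < c) (ht : t ≤ -1) :
    ∫⁻ ζ : ℂ in {ζ : ℂ | 0 < ζ.re ∧ ζ.re < 1 ∧ u < ζ.im ∧ ζ.im < u + 1},
      ENNReal.ofReal (c * (ζ.im - u) ^ t) = ⊤ := by
  set f : ℝ × ℝ → ℝ≥0∞ := fun p => ENNReal.ofReal (c * (p.2 - u) ^ t) with hf
  have hfm : Measurable f :=
    ENNReal.measurable_ofReal.comp
      (measurable_const.mul ((measurable_rpow_const t).comp (measurable_snd.sub measurable_const)))
  have hS : MeasurableSet ((Ioo (0:ℝ) 1) ×ˢ (Ioo u (u+1))) :=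
    measurableSet_Ioo.prod measurableSet_Ioo
  have hset : {ζ : ℂ | 0 < ζ.re ∧ ζ.re < 1 ∧ u < ζ.im ∧ ζ.im < u + 1}
      = Complex.measurableEquivRealProd ⁻¹' ((Ioo (0:ℝ) 1) ×ˢ (Ioo u (u+1))) := by
    ext ζ
    simp [Set.mem_preimage, Set.mem_prod, Set.mem_Ioo, and_assoc]
  have key := Complex.volume_preserving_equiv_real_prod.setLIntegral_comp_preimage hS hfm
  rw [hset]
  have : (fun ζ : ℂ => ENNReal.ofReal (c * (ζ.im - u) ^ t))
      = fun ζ : ℂ => f (Complex.measurableEquivRealProd ζ) := by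
    funext ζ; simp [hf]
  rw [this, key]
  -- now on ℝ × ℝ
  rw [Measure.volume_eq_prod, ← Measure.prod_restrict, lintegral_prod _ hfm.aemeasurable]
  have hinner : ∀ x : ℝ, ∫⁻ y in Ioo u (u+1), f (x, y) = ⊤ := by
    intro x
    have himg : ((· + u) '' Ioo (0:ℝ) 1) = Ioo u (u+1) := by
      rw [Set.image_add_const_Ioo]; norm_num [add_comm]
    have hkey := (measurePreserving_add_right volume u).setLIntegral_comp_emb
      (MeasurableEquiv.addRight u).measurableEmbedding (fun y => f (x, y)) (Ioo 0 1)
    have heq : (fun v : ℝ => f (x, v + u)) = fun v => ENNReal.ofReal (c * v ^ t) := by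
      funext v; simp [hf]
    rw [heq] at hkey
    rw [← himg, ← hkey]
    have : ∀ v : ℝ, ENNReal.ofReal (c * v ^ t) = ENNReal.ofReal c * ENNReal.ofReal (v ^ t) :=
      fun v => ENNReal.ofReal_mul hc.le
    simp_rw [this]
    rw [lintegral_const_mul (ENNReal.ofReal c)
      (f := fun v => ENNReal.ofReal (v ^ t))
      (ENNReal.measurable_ofReal.comp (measurable_rpow_const t)), L3 t ht,
      ENNReal.mul_top (by simpa using hc)]
  simp_rw [hinner]
  rw [setLIntegral_const, Real.volume_Ioo]
  rw [ENNReal.top_mul (by norm_num)]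

lemma slice2 (q Y : ℝ) (hq : -2 ≤ q) (hY : 0 < Y) :
    ∫⁻ ζ : ℂ in {ζ : ℂ | 0 < ζ.re ∧ ζ.re < ζ.im ∧ Y < ζ.im},
      ENNReal.ofReal (ζ.im ^ q) = ⊤ := by
  set T : Set (ℝ × ℝ) := {p | 0 < p.1 ∧ p.1 < p.2 ∧ Y < p.2} with hT
  have hTm : MeasurableSet T := by
    refine MeasurableSet.inter (measurableSet_lt measurable_const measurable_fst) ?_
    exact MeasurableSet.inter (measurableSet_lt measurable_fst measurable_snd)
      (measurableSet_lt measurable_const measurable_snd)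
  set f : ℝ × ℝ → ℝ≥0∞ := fun p => ENNReal.ofReal (p.2 ^ q) with hf
  have hfm : Measurable f :=
    ENNReal.measurable_ofReal.comp ((measurable_rpow_const q).comp measurable_snd)
  have hset : {ζ : ℂ | 0 < ζ.re ∧ ζ.re < ζ.im ∧ Y < ζ.im}
      = Complex.measurableEquivRealProd ⁻¹' T := by
    ext ζ; simp [hT, Set.mem_preimage, Set.mem_setOf_eq]
  have key := Complex.volume_preserving_equiv_real_prod.setLIntegral_comp_preimage hTm hfm
  rw [hset]
  have : (fun ζ : ℂ => ENNReal.ofReal (ζ.im ^ q))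
      = fun ζ : ℂ => f (Complex.measurableEquivRealProd ζ) := by
    funext ζ; simp [hf]
  rw [this, key, ← lintegral_indicator hTm, Measure.volume_eq_prod,
    lintegral_prod_symm _ ((hfm.indicator hTm).aemeasurable)]
  have hinner : ∀ y : ℝ, (∫⁻ x, T.indicator f (x, y))
      = (Ioi Y).indicator (fun y => ENNReal.ofReal (y ^ q) * ENNReal.ofReal y) y := by
    intro y
    by_cases hy : Y < y
    · have h1 : (fun x => T.indicator f (x, y))
          = (Ioo 0 y).indicator (fun _ => ENNReal.ofReal (y ^ q)) := by
        funext x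
        by_cases hx : x ∈ Ioo 0 y
        · rw [Set.indicator_of_mem hx, Set.indicator_of_mem (show (x, y) ∈ T from ⟨hx.1, hx.2, hy⟩)]
        · rw [Set.indicator_of_notMem hx, Set.indicator_of_notMem]
          intro hmem; exact hx ⟨hmem.1, hmem.2.1⟩
      rw [h1, lintegral_indicator measurableSet_Ioo, setLIntegral_const, Real.volume_Ioo,
        sub_zero, Set.indicator_of_mem (Set.mem_Ioi.2 hy)]
    · have h1 : (fun x => T.indicator f (x, y)) = fun _ => 0 := by
        funext x
        exact Set.indicator_of_notMem (fun hmem => hy hmem.2.2) _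
      rw [h1, lintegral_const, zero_mul, Set.indicator_of_notMem (by simpa using hy)]
  simp_rw [hinner]
  rw [lintegral_indicator measurableSet_Ioi]
  have hcongr : ∫⁻ y in Ioi Y, ENNReal.ofReal (y ^ q) * ENNReal.ofReal y
      = ∫⁻ y in Ioi Y, ENNReal.ofReal (y ^ (q + 1)) := by
    refine setLIntegral_congr_fun measurableSet_Ioi (fun y hy => ?_)
    rw [← ENNReal.ofReal_mul (Real.rpow_nonneg (hY.trans hy).le q),
      Real.rpow_add_one (hY.trans hy).ne']
  rw [hcongr]
  exact L4 (q + 1) Y (by linarith) hY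


lemma re_rhoK (z w : Cn m) : (rhoK z w).re = (w.2.im + z.2.im) / 2 - (herm1 z.1 w.1).re := by
  unfold rhoK
  simp [Complex.div_re, Complex.mul_re, Complex.normSq]
  ring

lemma abs_rhoK_le (z w : Cn m) :
    ‖rhoK z w‖ ≤ (‖w.2‖ + ‖z.2‖) / 2 + ‖herm1 z.1 w.1‖ := by
  unfold rhoK
  have tri : ∀ a b : ℂ, ‖a - b‖ ≤ ‖a‖ + ‖b‖ := fun a b => by
    simpa [sub_eq_add_neg] using norm_add_le a (-b)
  refine le_trans (tri _ _) ?_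
  gcongr
  · rw [norm_mul, norm_div, Complex.norm_I, Complex.norm_two]
    have h := tri ((starRingEnd ℂ) w.2) z.2
    rw [Complex.norm_conj] at h
    linarith

lemma continuous_rhoK (z : Cn m) : Continuous fun w : Cn m => rhoK z w := by
  unfold rhoK
  exact (continuous_const.mul ((continuous_star.comp continuous_snd).sub continuous_const)).sub
    ((continuous_herm1 z.1).comp continuous_fst)

lemma meas_F (z : Cn m) (s t : ℝ) :
    Measurable fun w : Cn m => ENNReal.ofReal (rho w ^ t / ‖rhoK z w‖ ^ s) := by
  have h1 : Measurable fun w : Cn m => rho w :=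
    (Complex.measurable_im.comp measurable_snd).sub (continuous_nsq1.measurable.comp measurable_fst)
  have h2 : Measurable fun w : Cn m => ‖rhoK z w‖ :=
    (continuous_norm.comp (continuous_rhoK z)).measurable
  exact ENNReal.measurable_ofReal.comp
    (((measurable_rpow_const t).comp h1).div ((measurable_rpow_const s).comp h2))

end Aux

set_option maxHeartbeats 2000000 in
theorem key_lemma_diverge (m : ℕ) (s t : ℝ) (h : t ≤ -1 ∨ s - t ≤ (m : ℝ) + 1 + 1)
    (z : Cn m) (hz : z ∈ Siegel m) :
    ∫⁻ w in Siegel m, ENNReal.ofReal (rho w ^ t / ‖rhoK z w‖ ^ s) = ⊤ := by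
  have hz' : nsq1 z.1 < z.2.im := hz
  have hmeas_nsq : Measurable fun w : Cn m => nsq1 w.1 :=
    continuous_nsq1.measurable.comp measurable_fst
  have hmeas_re : Measurable fun w : Cn m => w.2.re := Complex.measurable_re.comp measurable_snd
  have hmeas_im : Measurable fun w : Cn m => w.2.im := Complex.measurable_im.comp measurable_snd
  rcases h with ht | hst
  · -- Case t ≤ -1
    set u₀ := nsq1 z.1 with hu₀
    have hu₀0 : 0 ≤ u₀ := nsq1_nonneg _
    have ha0 : 0 < z.2.im := lt_of_le_of_lt hu₀0 hz'
    set a := z.2.im with ha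
    set δ : ℝ := min 1 ((a / 4) ^ 2 / (u₀ + 1)) with hδdef
    have hδ0 : 0 < δ := lt_min one_pos (by positivity)
    have hδ1 : δ ≤ 1 := min_le_left _ _
    have hherm : ∀ w' : Fin m → ℂ, nsq1 w' < δ → ‖herm1 z.1 w'‖ ≤ a / 4 := by
      intro w' hw'
      refine (abs_herm1_le _ _).trans ?_
      rw [← Real.sqrt_mul hu₀0]
      have h2 : u₀ * nsq1 w' ≤ (a / 4) ^ 2 := by
        have hle : nsq1 w' ≤ (a / 4) ^ 2 / (u₀ + 1) := (lt_of_lt_of_le hw' (min_le_right _ _)).le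
        calc u₀ * nsq1 w' ≤ u₀ * ((a / 4) ^ 2 / (u₀ + 1)) := mul_le_mul_of_nonneg_left hle hu₀0
          _ ≤ (a / 4) ^ 2 := by
              rw [mul_comm, div_mul_eq_mul_div, div_le_iff₀ (by positivity)]
              nlinarith [sq_nonneg (a / 4)]
      calc Real.sqrt (u₀ * nsq1 w') ≤ Real.sqrt ((a / 4) ^ 2) := Real.sqrt_le_sqrt h2
        _ = a / 4 := Real.sqrt_sq (by positivity)
    set M := ‖z.2‖ with hM
    have hM0 : 0 ≤ M := norm_nonneg _
    set C₂ : ℝ := (3 + M) / 2 + a / 4 + 1 with hC₂def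
    have hC₂0 : 0 < C₂ := by positivity
    set D : ℝ := max (C₂ ^ s) ((a / 4) ^ s) with hDdef
    have hD0 : 0 < D := lt_of_lt_of_le (Real.rpow_pos_of_pos hC₂0 s) (le_max_left _ _)
    set S : Set (Cn m) :=
      {w | nsq1 w.1 < δ ∧ 0 < w.2.re ∧ w.2.re < 1 ∧ nsq1 w.1 < w.2.im ∧ w.2.im < nsq1 w.1 + 1}
      with hSdef
    have hSsub : S ⊆ Siegel m := fun w hw => hw.2.2.2.1
    have hSmeas : MeasurableSet S := by
      simp only [hSdef, Set.setOf_and]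
      exact ((measurableSet_lt hmeas_nsq measurable_const).inter
        ((measurableSet_lt measurable_const hmeas_re).inter
        ((measurableSet_lt hmeas_re measurable_const).inter
        ((measurableSet_lt hmeas_nsq hmeas_im).inter
        (measurableSet_lt hmeas_im (hmeas_nsq.add_const 1))))))
    set g : Cn m → ℝ≥0∞ := fun w => ENNReal.ofReal (D⁻¹ * rho w ^ t) with hgdef
    have hgmeas : Measurable g :=
      ENNReal.measurable_ofReal.comp
        (measurable_const.mul ((measurable_rpow_const t).comp (hmeas_im.sub hmeas_nsq)))
    have hpt : ∀ w ∈ S, g w ≤ ENNReal.ofReal (rho w ^ t / ‖rhoK z w‖ ^ s) := by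
      intro w hw
      obtain ⟨hw1, hw2, hw3, hw4, hw5⟩ := hw
      have hrho0 : 0 < rho w := sub_pos.2 hw4
      have hy0 : 0 < w.2.im := lt_of_le_of_lt (nsq1_nonneg _) hw4
      have hherm' := hherm w.1 hw1
      have hlow : a / 4 ≤ ‖rhoK z w‖ := by
        refine le_trans ?_ (Complex.re_le_norm _)
        rw [re_rhoK]
        have h1 : (herm1 z.1 w.1).re ≤ a / 4 := (Complex.re_le_norm _).trans hherm'
        linarith [hy0.le]
      have habs0 : 0 < ‖rhoK z w‖ := lt_of_lt_of_le (by positivity) hlow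
      have hup : ‖rhoK z w‖ ≤ C₂ := by
        refine (abs_rhoK_le z w).trans ?_
        have h2 : ‖w.2‖ ≤ 3 := by
          refine (Complex.norm_le_abs_re_add_abs_im _).trans ?_
          rw [abs_of_pos hw2, abs_of_pos hy0]
          linarith
        linarith [hherm']
      have hDb : ‖rhoK z w‖ ^ s ≤ D := rpow_le_max s (by positivity) hlow hup
      apply ENNReal.ofReal_le_ofReal
      have hrw : D⁻¹ * rho w ^ t = rho w ^ t / D := by ring
      rw [hrw]
      exact (div_le_div_iff_of_pos_left (Real.rpow_pos_of_pos hrho0 t) hD0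
        (Real.rpow_pos_of_pos habs0 s)).2 hDb
    have hS_top : ∫⁻ w in S, g w = ⊤ := by
      rw [← lintegral_indicator hSmeas, Measure.volume_eq_prod,
        lintegral_prod _ ((hgmeas.indicator hSmeas).aemeasurable)]
      set A : Set (Fin m → ℂ) := {w' | nsq1 w' < δ} with hA
      have hAm : MeasurableSet A := measurableSet_lt continuous_nsq1.measurable measurable_const
      have hA0 : volume A ≠ 0 :=
        ((isOpen_lt continuous_nsq1 continuous_const).measure_pos volume
          ⟨0, by simp [nsq1, hδ0]⟩).ne'
      have hinner : ∀ w' ∈ A, (∫⁻ ζ : ℂ, S.indicator g (w', ζ)) = ⊤ := by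
        intro w' hw'
        have hBmeas : MeasurableSet
            {ζ : ℂ | 0 < ζ.re ∧ ζ.re < 1 ∧ nsq1 w' < ζ.im ∧ ζ.im < nsq1 w' + 1} := by
          simp only [Set.setOf_and]
          exact ((measurableSet_lt measurable_const Complex.measurable_re).inter
            ((measurableSet_lt Complex.measurable_re measurable_const).inter
            ((measurableSet_lt measurable_const Complex.measurable_im).inter
            (measurableSet_lt Complex.measurable_im measurable_const))))
        have hrw : (fun ζ : ℂ => S.indicator g (w', ζ))
            = fun ζ : ℂ => Set.indicator
                {ζ : ℂ | 0 < ζ.re ∧ ζ.re < 1 ∧ nsq1 w' < ζ.im ∧ ζ.im < nsq1 w' + 1}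
                (fun ζ => ENNReal.ofReal (D⁻¹ * (ζ.im - nsq1 w') ^ t)) ζ := by
          funext ζ
          rw [Set.indicator_apply, Set.indicator_apply]
          have hiff : ((w', ζ) ∈ S)
              ↔ (ζ ∈ {ζ : ℂ | 0 < ζ.re ∧ ζ.re < 1 ∧ nsq1 w' < ζ.im ∧ ζ.im < nsq1 w' + 1}) := by
            simp only [hSdef, Set.mem_setOf_eq]
            exact ⟨fun h => h.2, fun h => ⟨hw', h⟩⟩
          exact if_congr hiff rfl rfl
        rw [hrw, lintegral_indicator hBmeas]
        exact slice1 (nsq1 w') D⁻¹ t (inv_pos.2 hD0) ht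
      refine eq_top_iff.mpr ?_
      calc (⊤ : ℝ≥0∞) = ⊤ * volume A := (ENNReal.top_mul hA0).symm
        _ = ∫⁻ _ in A, ⊤ := (setLIntegral_const A ⊤).symm
        _ ≤ ∫⁻ w' in A, (∫⁻ ζ : ℂ, S.indicator g (w', ζ)) :=
            setLIntegral_mono' hAm fun w' hw' => (hinner w' hw').ge
        _ ≤ ∫⁻ w' : Fin m → ℂ, (∫⁻ ζ : ℂ, S.indicator g (w', ζ)) :=
            setLIntegral_le_lintegral _ _
    refine eq_top_iff.mpr ?_
    calc (⊤ : ℝ≥0∞) = ∫⁻ w in S, g w := hS_top.symm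
      _ ≤ ∫⁻ w in S, ENNReal.ofReal (rho w ^ t / ‖rhoK z w‖ ^ s) :=
          setLIntegral_mono' hSmeas hpt
      _ ≤ ∫⁻ w in Siegel m, ENNReal.ofReal (rho w ^ t / ‖rhoK z w‖ ^ s) :=
          lintegral_mono_set hSsub
  · -- Case s - t ≤ m + 2
    set R := Real.sqrt (nsq1 z.1) with hR
    have hR0 : 0 ≤ R := Real.sqrt_nonneg _
    set M := ‖z.2‖ with hM
    have hM0 : 0 ≤ M := norm_nonneg _
    set Y : ℝ := 1 + 16 * R ^ 2 + M with hYdef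
    have hY1 : 1 ≤ Y := by nlinarith
    have hY0 : 0 < Y := lt_of_lt_of_le one_pos hY1
    set K : ℝ := 1 + M + R with hK
    have hK0 : 0 < K := by positivity
    set D₂ : ℝ := max (K ^ s) ((4⁻¹ : ℝ) ^ s) with hD₂
    have hD₂0 : 0 < D₂ := lt_of_lt_of_le (Real.rpow_pos_of_pos hK0 s) (le_max_left _ _)
    set E : ℝ := min ((2⁻¹ : ℝ) ^ t) 1 with hE
    have hE0 : 0 < E := lt_min (Real.rpow_pos_of_pos (by norm_num) t) one_pos
    set q : ℝ := t - s + m with hq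
    have hq2 : -2 ≤ q := by simp only [hq]; linarith
    set S : Set (Cn m) :=
      {w | nsq1 w.1 < w.2.im / 2 ∧ 0 < w.2.re ∧ w.2.re < w.2.im ∧ Y < w.2.im} with hSdef
    have hSsub : S ⊆ Siegel m := fun w hw => by
      have h1 : Y < w.2.im := hw.2.2.2
      have : nsq1 w.1 < w.2.im / 2 := hw.1
      show nsq1 w.1 < w.2.im
      linarith
    have hSmeas : MeasurableSet S := by
      simp only [hSdef, Set.setOf_and]
      exact ((measurableSet_lt hmeas_nsq (hmeas_im.div_const 2)).inter
        ((measurableSet_lt measurable_const hmeas_re).inter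
        ((measurableSet_lt hmeas_re hmeas_im).inter
        (measurableSet_lt measurable_const hmeas_im))))
    set g : Cn m → ℝ≥0∞ := fun w => ENNReal.ofReal (E / D₂ * w.2.im ^ (t - s)) with hgdef
    have hgmeas : Measurable g :=
      ENNReal.measurable_ofReal.comp
        (measurable_const.mul ((measurable_rpow_const (t - s)).comp hmeas_im))
    have hpt : ∀ w ∈ S, g w ≤ ENNReal.ofReal (rho w ^ t / ‖rhoK z w‖ ^ s) := by
      intro w hw
      obtain ⟨hw1, hw2, hw3, hw4⟩ := hw
      have hy0 : 0 < w.2.im := hY0.trans hw4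
      have hy1 : 1 ≤ w.2.im := hY1.trans hw4.le
      have hherm : ‖herm1 z.1 w.1‖ ≤ R * Real.sqrt w.2.im := by
        refine (abs_herm1_le _ _).trans ?_
        exact mul_le_mul_of_nonneg_left (Real.sqrt_le_sqrt (by linarith)) hR0
      have h4R : 4 * R ≤ Real.sqrt w.2.im := by
        have h1 : Real.sqrt (16 * R ^ 2) ≤ Real.sqrt w.2.im := Real.sqrt_le_sqrt (by linarith)
        rwa [show (16 : ℝ) * R ^ 2 = (4 * R) ^ 2 by ring, Real.sqrt_sq (by positivity)] at h1
      have hRy : R * Real.sqrt w.2.im ≤ w.2.im / 4 := by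
        have hs2 : Real.sqrt w.2.im * Real.sqrt w.2.im = w.2.im := Real.mul_self_sqrt hy0.le
        nlinarith [Real.sqrt_nonneg w.2.im]
      have ha0' : (0 : ℝ) ≤ z.2.im := le_of_lt (lt_of_le_of_lt (nsq1_nonneg _) hz')
      have hlow : w.2.im / 4 ≤ ‖rhoK z w‖ := by
        refine le_trans ?_ (Complex.re_le_norm _)
        rw [re_rhoK]
        have h1 := (Complex.re_le_norm (herm1 z.1 w.1)).trans hherm
        linarith
      have habs0 : 0 < ‖rhoK z w‖ := lt_of_lt_of_le (by positivity) hlow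
      have hup : ‖rhoK z w‖ ≤ K * w.2.im := by
        refine (abs_rhoK_le z w).trans ?_
        have habs : ‖w.2‖ ≤ 2 * w.2.im := by
          refine (Complex.norm_le_abs_re_add_abs_im _).trans ?_
          rw [abs_of_pos hw2, abs_of_pos hy0]
          linarith
        have hsy : Real.sqrt w.2.im ≤ w.2.im := (Real.sqrt_le_left hy0.le).2 (by nlinarith)
        have hherm2 : ‖herm1 z.1 w.1‖ ≤ R * w.2.im :=
          hherm.trans (mul_le_mul_of_nonneg_left hsy hR0)
        have hM2 : M ≤ M * w.2.im := le_mul_of_one_le_right hM0 hy1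
        have hMy : 0 ≤ M * w.2.im := mul_nonneg hM0 hy0.le
        have hexp : K * w.2.im = w.2.im + M * w.2.im + R * w.2.im := by
          simp only [hK]; ring
        linarith
      have hrho_l : w.2.im / 2 ≤ rho w := by
        show w.2.im / 2 ≤ w.2.im - nsq1 w.1
        linarith
      have hrho_u : rho w ≤ w.2.im := by
        show w.2.im - nsq1 w.1 ≤ w.2.im
        linarith [nsq1_nonneg w.1]
      have hrho0 : 0 < rho w := lt_of_lt_of_le (by positivity) hrho_l
      have hrho_t : E * w.2.im ^ t ≤ rho w ^ t := by
        have hmin := min_le_rpow t (by positivity : (0:ℝ) < w.2.im / 2) hrho_l hrho_u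
        have hsplit : (w.2.im / 2) ^ t = 2⁻¹ ^ t * w.2.im ^ t := by
          rw [div_eq_mul_inv, Real.mul_rpow hy0.le (by norm_num)]
          ring
        have e3 : E * w.2.im ^ t = min (2⁻¹ ^ t * w.2.im ^ t) (1 * w.2.im ^ t) := by
          rw [hE, min_mul_of_nonneg _ _ (Real.rpow_nonneg hy0.le t)]
        rw [e3, one_mul, ← hsplit]
        exact hmin
      have habs_s : ‖rhoK z w‖ ^ s ≤ D₂ * w.2.im ^ s := by
        have hmax := rpow_le_max s (by positivity : (0:ℝ) < w.2.im / 4) hlow hup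
        have e1 : (K * w.2.im) ^ s = K ^ s * w.2.im ^ s := Real.mul_rpow hK0.le hy0.le
        have e2 : (w.2.im / 4) ^ s = 4⁻¹ ^ s * w.2.im ^ s := by
          rw [div_eq_mul_inv, Real.mul_rpow hy0.le (by norm_num)]
          ring
        rw [e1, e2, ← max_mul_of_nonneg _ _ (Real.rpow_nonneg hy0.le s)] at hmax
        exact hmax
      apply ENNReal.ofReal_le_ofReal
      have hys : (0:ℝ) < w.2.im ^ s := Real.rpow_pos_of_pos hy0 s
      calc E / D₂ * w.2.im ^ (t - s) = E * w.2.im ^ t / (D₂ * w.2.im ^ s) := by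
            rw [Real.rpow_sub hy0, div_mul_div_comm]
        _ ≤ rho w ^ t / (D₂ * w.2.im ^ s) :=
            (div_le_div_iff_of_pos_right (mul_pos hD₂0 hys)).2 hrho_t
        _ ≤ rho w ^ t / ‖rhoK z w‖ ^ s :=
            (div_le_div_iff_of_pos_left (Real.rpow_pos_of_pos hrho0 t) (mul_pos hD₂0 hys)
              (Real.rpow_pos_of_pos habs0 s)).2 habs_s
    have hS_top : ∫⁻ w in S, g w = ⊤ := by
      rw [← lintegral_indicator hSmeas, Measure.volume_eq_prod,
        lintegral_prod_symm _ ((hgmeas.indicator hSmeas).aemeasurable)]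
      set B : Set ℂ := {ζ : ℂ | 0 < ζ.re ∧ ζ.re < ζ.im ∧ Y < ζ.im} with hBdef
      have hBm : MeasurableSet B := by
        simp only [hBdef, Set.setOf_and]
        exact ((measurableSet_lt measurable_const Complex.measurable_re).inter
          ((measurableSet_lt Complex.measurable_re Complex.measurable_im).inter
          (measurableSet_lt measurable_const Complex.measurable_im)))
      have hinner : ∀ ζ ∈ B, (∫⁻ w' : Fin m → ℂ, S.indicator g (w', ζ))
          = ENNReal.ofReal (E / D₂ * ζ.im ^ (t - s))
            * (ENNReal.ofReal ((ζ.im / 2) ^ m) * VB m) := by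
        intro ζ hζ
        have hy0 : 0 < ζ.im := hY0.trans hζ.2.2
        have hrw : (fun w' : Fin m → ℂ => S.indicator g (w', ζ))
            = fun w' => Set.indicator {w' : Fin m → ℂ | nsq1 w' < ζ.im / 2}
                (fun _ => ENNReal.ofReal (E / D₂ * ζ.im ^ (t - s))) w' := by
          funext w'
          rw [Set.indicator_apply, Set.indicator_apply]
          have hiff : ((w', ζ) ∈ S) ↔ (w' ∈ {w' : Fin m → ℂ | nsq1 w' < ζ.im / 2}) := by
            simp only [hSdef, Set.mem_setOf_eq]
            exact ⟨fun h => h.1, fun h => ⟨h, hζ.1, hζ.2.1, hζ.2.2⟩⟩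
          exact if_congr hiff rfl rfl
        rw [hrw, lintegral_indicator (measurableSet_lt continuous_nsq1.measurable measurable_const),
          setLIntegral_const, volume_nsq1_lt _ (by positivity)]
      refine eq_top_iff.mpr ?_
      have houter : ∫⁻ ζ in B, ENNReal.ofReal (E / D₂ * ζ.im ^ (t - s))
          * (ENNReal.ofReal ((ζ.im / 2) ^ m) * VB m) = ⊤ := by
        have hcongr : ∀ ζ ∈ B, ENNReal.ofReal (E / D₂ * ζ.im ^ (t - s))
            * (ENNReal.ofReal ((ζ.im / 2) ^ m) * VB m)
            = (ENNReal.ofReal (E / D₂ * (2⁻¹ : ℝ) ^ m) * VB m) * ENNReal.ofReal (ζ.im ^ q) := by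
          intro ζ hζ
          have hy0 : 0 < ζ.im := hY0.trans hζ.2.2
          have e2 : ζ.im ^ (t - s) * ζ.im ^ (m : ℕ) = ζ.im ^ q := by
            rw [← Real.rpow_natCast ζ.im m, ← Real.rpow_add hy0, hq]
          calc ENNReal.ofReal (E / D₂ * ζ.im ^ (t - s))
              * (ENNReal.ofReal ((ζ.im / 2) ^ m) * VB m)
              = ENNReal.ofReal (E / D₂ * ζ.im ^ (t - s) * (ζ.im / 2) ^ m) * VB m := by
                rw [← mul_assoc, ← ENNReal.ofReal_mul (by positivity)]
            _ = ENNReal.ofReal (E / D₂ * (2⁻¹ : ℝ) ^ m * ζ.im ^ q) * VB m := by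
                congr 2
                rw [← e2, div_pow]
                field_simp
                rw [← mul_pow]; norm_num
            _ = (ENNReal.ofReal (E / D₂ * (2⁻¹ : ℝ) ^ m) * VB m) * ENNReal.ofReal (ζ.im ^ q) := by
                rw [ENNReal.ofReal_mul (by positivity)]
                ring
        rw [setLIntegral_congr_fun hBm hcongr,
          lintegral_const_mul' _ _ (ENNReal.mul_ne_top ENNReal.ofReal_ne_top VB_lt_top.ne),
          slice2 q Y hq2 hY0, ENNReal.mul_top]
        refine mul_ne_zero ?_ VB_pos.ne'
        simp only [ne_eq, ENNReal.ofReal_eq_zero, not_le]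
        positivity
      calc (⊤ : ℝ≥0∞) = ∫⁻ ζ in B, ENNReal.ofReal (E / D₂ * ζ.im ^ (t - s))
            * (ENNReal.ofReal ((ζ.im / 2) ^ m) * VB m) := houter.symm
        _ ≤ ∫⁻ ζ in B, (∫⁻ w' : Fin m → ℂ, S.indicator g (w', ζ)) :=
            setLIntegral_mono' hBm fun ζ hζ => le_of_eq (hinner ζ hζ).symm
        _ ≤ ∫⁻ ζ : ℂ, (∫⁻ w' : Fin m → ℂ, S.indicator g (w', ζ)) :=
            setLIntegral_le_lintegral _ _
    refine eq_top_iff.mpr ?_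
    calc (⊤ : ℝ≥0∞) = ∫⁻ w in S, g w := hS_top.symm
      _ ≤ ∫⁻ w in S, ENNReal.ofReal (rho w ^ t / ‖rhoK z w‖ ^ s) :=
          setLIntegral_mono' hSmeas hpt
      _ ≤ ∫⁻ w in Siegel m, ENNReal.ofReal (rho w ^ t / ‖rhoK z w‖ ^ s) :=
          lintegral_mono_set hSsub
end
end

section
/- (Schur's test) Let (X, μ) be a σ-finite measure space, Q(x,y) a nonnegative measurable function on X × X, and T the integral operator Tf(x) = ∫_X Q(x,y) f(y) dμ(y). Let 1 < p < ∞ and q = p/(p-1). If there exist a constant C > 0 and a positive measurable function g on X such that ∫_X Q(x,y) g(y)^q dμ(y) ≤ C g(x)^q for a.e. x, and ∫_X Q(x,y) g(x)^p dμ(x) ≤ C g(y)^p for a.e. y, then T is bounded on L^p(X, μ) with operator norm at most C. -/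
open MeasureTheory
open scoped ENNReal NNReal

theorem schur_test {X : Type*} [MeasurableSpace X] (μ : Measure X) [SigmaFinite μ]
    (Q : X → X → ℝ) (hQm : Measurable (Function.uncurry Q)) (hQ0 : ∀ x y, 0 ≤ Q x y)
    (p q : ℝ) (hp : 1 < p) (hq : q = p / (p - 1)) (C : ℝ) (hC : 0 < C)
    (g : X → ℝ) (hgm : Measurable g) (hg0 : ∀ x, 0 < g x)
    (h1 : ∀ᵐ x ∂μ, ∫⁻ y, ENNReal.ofReal (Q x y * g y ^ q) ∂μ ≤ ENNReal.ofReal (C * g x ^ q))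
    (h2 : ∀ᵐ y ∂μ, ∫⁻ x, ENNReal.ofReal (Q x y * g x ^ p) ∂μ ≤ ENNReal.ofReal (C * g y ^ p)) :
    ∀ f : X → ℝ, MemLp f (ENNReal.ofReal p) μ →
      MemLp (fun x => ∫ y, Q x y * f y ∂μ) (ENNReal.ofReal p) μ ∧
        eLpNorm (fun x => ∫ y, Q x y * f y ∂μ) (ENNReal.ofReal p) μ
          ≤ ENNReal.ofReal C * eLpNorm f (ENNReal.ofReal p) μ := by
  intro f hf
  have hpq : p.HolderConjugate q := (Real.holderConjugate_iff_eq_conjExponent hp).2 hq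
  have hp0 : 0 < p := hpq.pos
  have hq0 : 0 < q := hpq.symm.pos
  have hpq_sub : p / q = p - 1 := hpq.div_conj_eq_sub_one
  -- measurable representative of f
  set f' : X → ℝ := hf.aestronglyMeasurable.mk f with hf'def
  have hf'm : StronglyMeasurable f' := hf.aestronglyMeasurable.stronglyMeasurable_mk
  have hff' : f =ᵐ[μ] f' := hf.aestronglyMeasurable.ae_eq_mk
  set K : X → X → ℝ≥0∞ := fun x y => ENNReal.ofReal (Q x y) with hK
  set G : X → ℝ≥0∞ := fun x => ENNReal.ofReal (g x) with hG
  set F : X → ℝ≥0∞ := fun y => (‖f' y‖₊ : ℝ≥0∞) with hF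
  have hKm : Measurable (Function.uncurry K) := hQm.ennreal_ofReal
  have hKxm : ∀ x, Measurable (K x) := fun x =>
    hKm.comp (measurable_prodMk_left (x := x))
  have hKym : ∀ y, Measurable fun x => K x y := fun y =>
    hKm.comp (measurable_prodMk_right (y := y))
  have hGm : Measurable G := hgm.ennreal_ofReal
  have hFm : Measurable F := hf'm.measurable.enorm
  have hG0 : ∀ x, G x ≠ 0 := fun x => by
    simp [hG, ENNReal.ofReal_eq_zero, not_le, hg0 x]
  have hGtop : ∀ x, G x ≠ ∞ := fun x => ENNReal.ofReal_ne_top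
  have hGq : ∀ x, G x ^ q = ENNReal.ofReal (g x ^ q) := fun x =>
    ENNReal.ofReal_rpow_of_pos (hg0 x)
  have hGp : ∀ x, G x ^ p = ENNReal.ofReal (g x ^ p) := fun x =>
    ENNReal.ofReal_rpow_of_pos (hg0 x)
  set A : ℝ≥0∞ := ENNReal.ofReal C with hA
  have hA0 : A ≠ 0 := by simp [hA, ENNReal.ofReal_eq_zero, not_le, hC]
  have hAtop : A ≠ ∞ := ENNReal.ofReal_ne_top
  set I : X → ℝ≥0∞ := fun x => ∫⁻ y, K x y * F y ^ p / G y ^ p ∂μ with hI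
  set Tn : X → ℝ≥0∞ := fun x => ∫⁻ y, K x y * F y ∂μ with hTn
  -- Step A: pointwise Hölder
  have stepA : ∀ᵐ x ∂μ, Tn x ^ p ≤ A ^ (p - 1) * (G x ^ p * I x) := by
    filter_upwards [h1] with x hx
    have key : Tn x ≤ I x ^ (1 / p) * (A * G x ^ q) ^ (1 / q) := by
      have hsplit : ∀ y, K x y * F y
          = (K x y ^ (1 / p) * (F y / G y)) * (K x y ^ (1 / q) * G y) := by
        intro y
        symm
        have hKK : K x y ^ (1 / p) * K x y ^ (1 / q) = K x y := by
          rcases eq_or_ne (K x y) 0 with h0 | h0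
          · rw [h0, ENNReal.zero_rpow_of_pos (by positivity), zero_mul]
          · rw [← ENNReal.rpow_add _ _ h0 ENNReal.ofReal_ne_top, one_div, one_div,
              hpq.inv_add_inv_eq_one, ENNReal.rpow_one]
        calc (K x y ^ (1 / p) * (F y / G y)) * (K x y ^ (1 / q) * G y)
            = (K x y ^ (1 / p) * K x y ^ (1 / q)) * (F y / G y * G y) := by ring
          _ = K x y * F y := by rw [hKK, ENNReal.div_mul_cancel (hG0 y) (hGtop y)]
      have hm1 : AEMeasurable (fun y => K x y ^ (1 / p) * (F y / G y)) μ :=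
        (((hKxm x).pow measurable_const).mul (hFm.div hGm)).aemeasurable
      have hm2 : AEMeasurable (fun y => K x y ^ (1 / q) * G y) μ :=
        (((hKxm x).pow measurable_const).mul hGm).aemeasurable
      have holder := ENNReal.lintegral_mul_le_Lp_mul_Lq μ hpq hm1 hm2
      have e1 : ∀ y, (K x y ^ (1 / p) * (F y / G y)) ^ p = K x y * (F y ^ p / G y ^ p) := by
        intro y
        rw [ENNReal.mul_rpow_of_nonneg _ _ hp0.le, ← ENNReal.rpow_mul,
          one_div_mul_cancel hp0.ne', ENNReal.rpow_one,
          ENNReal.div_rpow_of_nonneg _ _ hp0.le]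
      have e2 : ∀ y, (K x y ^ (1 / q) * G y) ^ q = K x y * G y ^ q := by
        intro y
        rw [ENNReal.mul_rpow_of_nonneg _ _ hq0.le, ← ENNReal.rpow_mul,
          one_div_mul_cancel hq0.ne', ENNReal.rpow_one]
      have hint2 : ∫⁻ y, (K x y ^ (1 / q) * G y) ^ q ∂μ ≤ A * G x ^ q := by
        simp_rw [e2]
        calc ∫⁻ y, K x y * G y ^ q ∂μ
            = ∫⁻ y, ENNReal.ofReal (Q x y * g y ^ q) ∂μ := by
              refine lintegral_congr fun y => ?_
              rw [hGq, hK, ← ENNReal.ofReal_mul (hQ0 x y)]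
          _ ≤ ENNReal.ofReal (C * g x ^ q) := hx
          _ = A * G x ^ q := by rw [hGq, hA, ← ENNReal.ofReal_mul hC.le]
      calc Tn x = ∫⁻ y, (K x y ^ (1 / p) * (F y / G y)) * (K x y ^ (1 / q) * G y) ∂μ := by
            rw [hTn]; exact lintegral_congr fun y => hsplit y
        _ ≤ (∫⁻ y, (K x y ^ (1 / p) * (F y / G y)) ^ p ∂μ) ^ (1 / p)
            * (∫⁻ y, (K x y ^ (1 / q) * G y) ^ q ∂μ) ^ (1 / q) := holder
        _ ≤ I x ^ (1 / p) * (A * G x ^ q) ^ (1 / q) := by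
            have hIeq : (∫⁻ y, (K x y ^ (1 / p) * (F y / G y)) ^ p ∂μ) = I x := by
              rw [hI]; exact lintegral_congr fun y => by rw [e1, mul_div_assoc]
            rw [hIeq]
            exact mul_le_mul_right (ENNReal.rpow_le_rpow hint2 (by positivity)) _
    calc Tn x ^ p ≤ (I x ^ (1 / p) * (A * G x ^ q) ^ (1 / q)) ^ p :=
          ENNReal.rpow_le_rpow key hp0.le
      _ = I x * (A ^ (p - 1) * G x ^ p) := by
          have h1q : 1 / q * p = p - 1 := by rw [one_div, inv_mul_eq_div, hpq_sub]
          have h2q : q * (p - 1) = p := by rw [mul_comm]; exact hpq.sub_one_mul_conj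
          rw [ENNReal.mul_rpow_of_nonneg _ _ hp0.le, ← ENNReal.rpow_mul,
            one_div_mul_cancel hp0.ne', ENNReal.rpow_one, ← ENNReal.rpow_mul, h1q,
            ENNReal.mul_rpow_of_nonneg _ _ (sub_nonneg.2 hp.le), ← ENNReal.rpow_mul, h2q]
      _ = A ^ (p - 1) * (G x ^ p * I x) := by ring
  -- Step C: double integral bound via Tonelli
  have hFtop : ∀ y, F y ^ p ≠ ∞ := fun y =>
    ENNReal.rpow_ne_top_of_nonneg hp0.le ENNReal.coe_ne_top
  have hGp0 : ∀ y, G y ^ p ≠ 0 := fun y =>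
    (ENNReal.rpow_pos ((hG0 y).bot_lt) (hGtop y)).ne'
  have hGptop : ∀ y, G y ^ p ≠ ∞ := fun y =>
    ENNReal.rpow_ne_top_of_nonneg hp0.le (hGtop y)
  have hdivtop : ∀ y, F y ^ p / G y ^ p ≠ ∞ := fun y =>
    (ENNReal.div_lt_top (hFtop y) (hGp0 y)).ne
  have hprodm : Measurable fun z : X × X => G z.1 ^ p * (K z.1 z.2 * F z.2 ^ p / G z.2 ^ p) :=
    (((hGm.comp measurable_fst).pow measurable_const).mul
      ((hKm.mul ((hFm.comp measurable_snd).pow measurable_const)).div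
        ((hGm.comp measurable_snd).pow measurable_const)))
  have swap1 : ∫⁻ x, G x ^ p * I x ∂μ
      = ∫⁻ y, (F y ^ p / G y ^ p) * ∫⁻ x, K x y * G x ^ p ∂μ ∂μ := by
    calc ∫⁻ x, G x ^ p * I x ∂μ
        = ∫⁻ x, ∫⁻ y, G x ^ p * (K x y * F y ^ p / G y ^ p) ∂μ ∂μ := by
          refine lintegral_congr fun x => ?_
          rw [hI]
          exact (lintegral_const_mul' _ _ (hGptop x)).symm
      _ = ∫⁻ y, ∫⁻ x, G x ^ p * (K x y * F y ^ p / G y ^ p) ∂μ ∂μ :=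
          lintegral_lintegral_swap hprodm.aemeasurable
      _ = ∫⁻ y, (F y ^ p / G y ^ p) * ∫⁻ x, K x y * G x ^ p ∂μ ∂μ := by
          refine lintegral_congr fun y => ?_
          rw [← lintegral_const_mul' _ _ (hdivtop y)]
          refine lintegral_congr fun x => ?_
          simp only [div_eq_mul_inv]
          ring
  have stepC : ∫⁻ x, G x ^ p * I x ∂μ ≤ A * ∫⁻ y, F y ^ p ∂μ := by
    rw [swap1]
    calc ∫⁻ y, (F y ^ p / G y ^ p) * ∫⁻ x, K x y * G x ^ p ∂μ ∂μ
        ≤ ∫⁻ y, (F y ^ p / G y ^ p) * (A * G y ^ p) ∂μ := by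
          refine lintegral_mono_ae ?_
          filter_upwards [h2] with y hy
          refine mul_le_mul_right ?_ _
          calc ∫⁻ x, K x y * G x ^ p ∂μ
              = ∫⁻ x, ENNReal.ofReal (Q x y * g x ^ p) ∂μ := by
                refine lintegral_congr fun x => ?_
                rw [hGp, hK, ← ENNReal.ofReal_mul (hQ0 x y)]
            _ ≤ ENNReal.ofReal (C * g y ^ p) := hy
            _ = A * G y ^ p := by rw [hGp, hA, ← ENNReal.ofReal_mul hC.le]
      _ = A * ∫⁻ y, F y ^ p ∂μ := by
          rw [← lintegral_const_mul' A _ hAtop]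
          refine lintegral_congr fun y => ?_
          rw [mul_left_comm, ENNReal.div_mul_cancel (hGp0 y) (hGptop y)]
  -- Step B: total bound
  have stepB : ∫⁻ x, Tn x ^ p ∂μ ≤ A ^ p * ∫⁻ y, F y ^ p ∂μ := by
    calc ∫⁻ x, Tn x ^ p ∂μ
        ≤ ∫⁻ x, A ^ (p - 1) * (G x ^ p * I x) ∂μ := lintegral_mono_ae stepA
      _ = A ^ (p - 1) * ∫⁻ x, G x ^ p * I x ∂μ :=
          lintegral_const_mul' _ _ (ENNReal.rpow_ne_top_of_nonneg (sub_nonneg.2 hp.le) hAtop)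
      _ ≤ A ^ (p - 1) * (A * ∫⁻ y, F y ^ p ∂μ) := mul_le_mul_right stepC _
      _ = A ^ p * ∫⁻ y, F y ^ p ∂μ := by
          rw [← mul_assoc]
          congr 1
          nth_rewrite 2 [← ENNReal.rpow_one A]
          rw [← ENNReal.rpow_add _ _ hA0 hAtop, sub_add_cancel]
  -- Pointwise bound on T f
  have hT' : ∀ x, (∫ y, Q x y * f y ∂μ) = ∫ y, Q x y * f' y ∂μ := fun x =>
    integral_congr_ae (hff'.mono fun y hy => by dsimp only; rw [hy])
  have hTnorm : ∀ x, (‖∫ y, Q x y * f y ∂μ‖₊ : ℝ≥0∞) ≤ Tn x := by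
    intro x
    rw [hT' x]
    calc (‖∫ y, Q x y * f' y ∂μ‖₊ : ℝ≥0∞) ≤ ∫⁻ y, ‖Q x y * f' y‖₊ ∂μ :=
        enorm_integral_le_lintegral_enorm _
      _ = Tn x := by
        refine lintegral_congr fun y => ?_
        rw [nnnorm_mul, ENNReal.coe_mul, ← enorm_eq_nnnorm, Real.enorm_eq_ofReal (hQ0 x y)]
  -- eLpNorm computations
  set ep := ENNReal.ofReal p with hep
  have hep0 : ep ≠ 0 := by simp [hep, ENNReal.ofReal_eq_zero, not_le, hp0]
  have heptop : ep ≠ ∞ := ENNReal.ofReal_ne_top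
  have heptoReal : ep.toReal = p := ENNReal.toReal_ofReal hp0.le
  have hfnorm : eLpNorm f ep μ = (∫⁻ y, F y ^ p ∂μ) ^ (1 / p) := by
    rw [eLpNorm_congr_ae hff', eLpNorm_eq_lintegral_rpow_enorm_toReal hep0 heptop, heptoReal, hF]; rfl
  have hTbound : eLpNorm (fun x => ∫ y, Q x y * f y ∂μ) ep μ ≤ A * eLpNorm f ep μ := by
    rw [eLpNorm_eq_lintegral_rpow_enorm_toReal hep0 heptop, heptoReal, hfnorm]
    calc (∫⁻ x, (‖∫ y, Q x y * f y ∂μ‖₊ : ℝ≥0∞) ^ p ∂μ) ^ (1 / p)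
        ≤ (∫⁻ x, Tn x ^ p ∂μ) ^ (1 / p) :=
          ENNReal.rpow_le_rpow
            (lintegral_mono fun x => ENNReal.rpow_le_rpow (hTnorm x) hp0.le) (by positivity)
      _ ≤ (A ^ p * ∫⁻ y, F y ^ p ∂μ) ^ (1 / p) := ENNReal.rpow_le_rpow stepB (by positivity)
      _ = A * (∫⁻ y, F y ^ p ∂μ) ^ (1 / p) := by
          rw [ENNReal.mul_rpow_of_nonneg _ _ (by positivity), ← ENNReal.rpow_mul,
            mul_one_div, div_self hp0.ne', ENNReal.rpow_one]
  -- measurability of T f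
  have hTmeas : AEStronglyMeasurable (fun x => ∫ y, Q x y * f y ∂μ) μ := by
    have hsm : StronglyMeasurable fun x => ∫ y, Q x y * f' y ∂μ := by
      have hsm0 : StronglyMeasurable fun z : X × X => Q z.1 z.2 * f' z.2 :=
        (hQm.mul (hf'm.measurable.comp measurable_snd)).stronglyMeasurable
      exact hsm0.integral_prod_right'
    have : (fun x => ∫ y, Q x y * f y ∂μ) = fun x => ∫ y, Q x y * f' y ∂μ := funext hT'
    rw [this]
    exact hsm.aestronglyMeasurable
  exact ⟨⟨hTmeas, lt_of_le_of_lt hTbound (ENNReal.mul_lt_top hAtop.lt_top hf.2)⟩, hTbound⟩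
end
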